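/- The discrete Liouville lattice equation f_{l,m} = (f_{l,m-1} f_{l-1,m} + β)/f_{l-1,m-1} with initial data f_{l,0} = X_{l,0} and f_{0,m} = X_{0,m} has the Laurent property: every f_{l,m} with l,m ≥ 0 is a Laurent polynomial in the initial values. -/

import Mathlib

open MvPolynomial

section DiscreteLiouvilleAux

variable {K : Type*} [Field K] (x : ℕ × ℕ → K) (b : K)

/-- Explicit closed-form solution of the discrete Liouville lattice equation:
`F (l, m) = x (l,0) * x (0,m) * x(0,0)⁻¹ * (1 + b * U l * V m)` where `U`, `V` are
the boundary Laurent sums. -/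
noncomputable def dlF (p : ℕ × ℕ) : K :=
  x (p.1, 0) * x (0, p.2) * (x (0, 0))⁻¹ *
    (1 + b * (∑ i ∈ Finset.range p.1, (x (i, 0) * x (i + 1, 0))⁻¹)
           * (∑ j ∈ Finset.range p.2, (x (0, 0)) ^ 2 * (x (0, j) * x (0, j + 1))⁻¹))

lemma dlF_row (hc : x (0, 0) ≠ 0) (l : ℕ) : dlF x b (l, 0) = x (l, 0) := by
  have hc' : x ((0 : ℕ), (0 : ℕ)) ≠ 0 := hc
  simp [dlF]
  rw [mul_assoc, mul_inv_cancel₀ (show x (0, 0) ≠ 0 from hc'), mul_one]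

lemma dlF_col (hc : x (0, 0) ≠ 0) (m : ℕ) : dlF x b (0, m) = x (0, m) := by
  have hc' : x ((0 : ℕ), (0 : ℕ)) ≠ 0 := hc
  simp [dlF]
  rw [mul_comm (x (0, 0)) (x (0, m)), mul_assoc,
    mul_inv_cancel₀ (show x (0, 0) ≠ 0 from hc'), mul_one]

lemma dlF_rec (hx : ∀ p : ℕ × ℕ, p.1 = 0 ∨ p.2 = 0 → x p ≠ 0) (l m : ℕ) :
    dlF x b (l + 1, m + 1) * dlF x b (l, m)
      = dlF x b (l + 1, m) * dlF x b (l, m + 1) + b := by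
  have ha1 : x (l, 0) ≠ 0 := hx _ (Or.inr rfl)
  have ha2 : x (l + 1, 0) ≠ 0 := hx _ (Or.inr rfl)
  have hb1 : x (0, m) ≠ 0 := hx _ (Or.inl rfl)
  have hb2 : x (0, m + 1) ≠ 0 := hx _ (Or.inl rfl)
  have hc : x (0, 0) ≠ 0 := hx _ (Or.inl rfl)
  simp only [dlF, Finset.sum_range_succ]
  generalize (∑ i ∈ Finset.range l, (x (i, 0) * x (i + 1, 0))⁻¹) = u
  generalize (∑ j ∈ Finset.range m, (x (0, 0)) ^ 2 * (x (0, j) * x (0, j + 1))⁻¹) = v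
  revert ha1 ha2 hb1 hb2 hc
  generalize x (l, 0) = a1
  generalize x (l + 1, 0) = a2
  generalize x (0, m) = b1
  generalize x (0, m + 1) = b2
  generalize x (0, 0) = c
  intro ha1 ha2 hb1 hb2 hc
  have hp : (a1 * a2) * (a1 * a2)⁻¹ = 1 := mul_inv_cancel₀ (mul_ne_zero ha1 ha2)
  have hq : (b1 * b2) * (b1 * b2)⁻¹ = 1 := mul_inv_cancel₀ (mul_ne_zero hb1 hb2)
  have hd : c * c⁻¹ = 1 := mul_inv_cancel₀ hc
  linear_combination (b * (b1 * b2) * (b1 * b2)⁻¹ * (c * c⁻¹) ^ 2) * hp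
    + (b * (c * c⁻¹) ^ 2) * hq + (b * (c * c⁻¹ + 1)) * hd

lemma dlF_mem (k : Type*) [CommRing k] [Algebra k K] (β : k) (hb : b = algebraMap k K β)
    (p : ℕ × ℕ) :
    dlF x b p ∈ Algebra.adjoin k
      {z : K | ∃ q : ℕ × ℕ, (q.1 = 0 ∨ q.2 = 0) ∧ (z = x q ∨ z = (x q)⁻¹)} := by
  set A := Algebra.adjoin k
      {z : K | ∃ q : ℕ × ℕ, (q.1 = 0 ∨ q.2 = 0) ∧ (z = x q ∨ z = (x q)⁻¹)} with hA
  have hxm : ∀ q : ℕ × ℕ, (q.1 = 0 ∨ q.2 = 0) → x q ∈ A :=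
    fun q hq => Algebra.subset_adjoin ⟨q, hq, Or.inl rfl⟩
  have hxi : ∀ q : ℕ × ℕ, (q.1 = 0 ∨ q.2 = 0) → (x q)⁻¹ ∈ A :=
    fun q hq => Algebra.subset_adjoin ⟨q, hq, Or.inr rfl⟩
  have hbm : b ∈ A := by rw [hb]; exact A.algebraMap_mem β
  refine mul_mem (mul_mem (mul_mem (hxm _ (Or.inr rfl)) (hxm _ (Or.inl rfl)))
    (hxi _ (Or.inl rfl))) (add_mem (one_mem A) (mul_mem (mul_mem hbm ?_) ?_))
  · exact A.sum_mem fun i _ => by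
      rw [mul_inv]
      exact mul_mem (hxi _ (Or.inr rfl)) (hxi _ (Or.inr rfl))
  · exact A.sum_mem fun j _ => by
      rw [mul_inv]
      exact mul_mem (pow_mem (hxm _ (Or.inl rfl)) 2)
        (mul_mem (hxi _ (Or.inl rfl)) (hxi _ (Or.inl rfl)))

end DiscreteLiouvilleAux

/-- The discrete Liouville lattice equation
`f (l, m) = (f (l, m-1) * f (l-1, m) + β) / f (l-1, m-1)`
with initial data `f (l, 0) = X (l, 0)` and `f (0, m) = X (0, m)` has the Laurent
property: every `f (l, m)` is a Laurent polynomial in the boundary initial values,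
i.e. lies in the subalgebra of the rational function field generated by the boundary
variables and their inverses. -/
theorem laurent_property_discrete_liouville
    (k : Type*) [Field k] (β : k) (hβ : β ≠ 0)
    (x : ℕ × ℕ → FractionRing (MvPolynomial (ℕ × ℕ) k))
    (hx : ∀ p, x p = algebraMap (MvPolynomial (ℕ × ℕ) k) _ (X p))
    (f : ℕ × ℕ → FractionRing (MvPolynomial (ℕ × ℕ) k))
    (hinit : ∀ p : ℕ × ℕ, p.1 = 0 ∨ p.2 = 0 → f p = x p)
    (hne : ∀ p, f p ≠ 0)
    (hrec : ∀ l m : ℕ, f (l + 1, m + 1) * f (l, m)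
      = f (l + 1, m) * f (l, m + 1) + algebraMap (MvPolynomial (ℕ × ℕ) k) _ (C β)) :
    ∀ p : ℕ × ℕ, f p ∈ Algebra.adjoin k
      {z : FractionRing (MvPolynomial (ℕ × ℕ) k) |
        ∃ q : ℕ × ℕ, (q.1 = 0 ∨ q.2 = 0) ∧ (z = x q ∨ z = (x q)⁻¹)} := by
  set b : FractionRing (MvPolynomial (ℕ × ℕ) k) :=
    algebraMap (MvPolynomial (ℕ × ℕ) k) (FractionRing (MvPolynomial (ℕ × ℕ) k)) (C β)
    with hbdef
  have hxne : ∀ q : ℕ × ℕ, (q.1 = 0 ∨ q.2 = 0) → x q ≠ 0 := by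
    intro q hq
    rw [← hinit q hq]
    exact hne q
  have hc : x (0, 0) ≠ 0 := hxne _ (Or.inl rfl)
  -- f agrees with the explicit solution dlF everywhere
  have key : ∀ l m : ℕ, f (l, m) = dlF x b (l, m) := by
    intro l
    induction l with
    | zero =>
      intro m
      rw [hinit (0, m) (Or.inl rfl), dlF_col x b hc]
    | succ l ih =>
      intro m
      induction m with
      | zero =>
        rw [hinit (l + 1, 0) (Or.inr rfl), dlF_row x b hc]
      | succ m ihm =>
        have h := hrec l m
        rw [ih m, ih (m + 1), ihm] at h
        have h2 := dlF_rec x b hxne l m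
        have hFne : dlF x b (l, m) ≠ 0 := by
          rw [← ih m]; exact hne (l, m)
        exact mul_right_cancel₀ hFne (h.trans h2.symm)
  intro p
  obtain ⟨l, m⟩ := p
  rw [key l m]
  refine dlF_mem x b k β ?_ (l, m)
  rw [hbdef, IsScalarTower.algebraMap_apply k (MvPolynomial (ℕ × ℕ) k)
    (FractionRing (MvPolynomial (ℕ × ℕ) k)), algebraMap_eq]
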